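/- Let t ≥ 1 and k = 2t, and suppose Φ_1, …, Φ_{2t} and S_1, …, S_{2t} satisfy the (r = 2) subspace conditions. For p, q in {1,…,t} let Π_{p,q} denote the composition applying Φ_{2p−1} first and then Φ_{2q} (the paper's product Φ_{2p−1}Φ_{2q}). If S_{2p−1} ∩ S_{2q} ≠ {0} for every p, q in {1,…,t}, then the t² endomorphisms Π_{p,q}, (p,q) ∈ {1,…,t}², are linearly independent over F. -/

import Mathlib

set_option maxHeartbeats 1000000


/-- Under the (r = 2) subspace conditions for `Φ₁, …, Φ_{2t}` and
`S₁, …, S_{2t}`, if `S_{2p−1} ∩ S_{2q} ≠ {0}` for every `p, q ∈ {1,…,t}`, then the `t²`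
compositions `Π_{p,q}` (apply `Φ_{2p−1}` first, then `Φ_{2q}`) are linearly independent. -/
theorem stmt2 (F : Type*) [Field F] (V : Type*) [AddCommGroup V] [Module F V]
    [FiniteDimensional F V] (ℓ : ℕ) (hℓeven : Even ℓ) (hℓpos : 0 < ℓ)
    (hdim : Module.finrank F V = ℓ)
    (t : ℕ) (ht : 1 ≤ t)
    (Φ : Fin (2 * t) → V ≃ₗ[F] V) (S : Fin (2 * t) → Submodule F V)
    (hSdim : ∀ i, Module.finrank F (S i) = ℓ / 2)
    (h1 : ∀ i j : Fin (2 * t), i ≠ j → (S i).map (Φ j : V →ₗ[F] V) = S i)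
    (h2 : ∀ i : Fin (2 * t), (S i).map (Φ i : V →ₗ[F] V) ⊓ S i = ⊥)
    (Pi : Fin t → Fin t → Module.End F V)
    (hPi : ∀ p q : Fin t, Pi p q =
      ((Φ ⟨2 * q.val + 1, by omega⟩ : V →ₗ[F] V)) ∘ₗ ((Φ ⟨2 * p.val, by omega⟩ : V →ₗ[F] V)))
    (hint : ∀ p q : Fin t,
      S ⟨2 * p.val, by omega⟩ ⊓ S ⟨2 * q.val + 1, by omega⟩ ≠ ⊥) :
    LinearIndependent F (fun pq : Fin t × Fin t => Pi pq.1 pq.2) := by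
  classical
  rw [Fintype.linearIndependent_iff]
  intro g hg pq₀
  obtain ⟨p₀, q₀⟩ := pq₀
  -- basic preservation facts
  have hpres : ∀ (i j : Fin (2*t)), i ≠ j → ∀ x : V, x ∈ S i → Φ j x ∈ S i := by
    intro i j hij x hx
    have h := Submodule.mem_map_of_mem (f := (Φ j : V →ₗ[F] V)) hx
    rwa [h1 i j hij] at h
  have hpres' : ∀ (i j : Fin (2*t)), i ≠ j → ∀ x : V, Φ j x ∈ S i → x ∈ S i := by
    intro i j hij x hx
    rw [← h1 i j hij] at hx
    obtain ⟨y, hy, hyx⟩ := hx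
    have : y = x := (Φ j).injective hyx
    rwa [← this]
  -- complements
  have hcompl : ∀ i, IsCompl ((S i).map (Φ i : V →ₗ[F] V)) (S i) := by
    intro i
    have hrk : Module.finrank F ((S i).map (Φ i : V →ₗ[F] V)) = ℓ / 2 := by
      rw [LinearEquiv.finrank_map_eq (Φ i) (S i)]; exact hSdim i
    have hdisj : Disjoint ((S i).map (Φ i : V →ₗ[F] V)) (S i) := by
      rw [disjoint_iff]; exact h2 i
    refine ⟨hdisj, ?_⟩
    rw [codisjoint_iff]
    apply Submodule.eq_top_of_finrank_eq
    have h := Submodule.finrank_sup_add_finrank_inf_eq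
      ((S i).map (Φ i : V →ₗ[F] V)) (S i)
    rw [h2 i, finrank_bot] at h
    obtain ⟨m, hm⟩ := hℓeven
    rw [hdim, hrk, hSdim i] at *
    omega
  set a : Fin (2*t) := ⟨2 * p₀.val, by omega⟩ with ha
  set b : Fin (2*t) := ⟨2 * q₀.val + 1, by omega⟩ with hb
  have hab : a ≠ b := by
    simp only [ha, hb, Fin.mk.injEq, ne_eq]; omega
  set A' : Submodule F V := (S a).map (Φ a : V →ₗ[F] V) with hA'
  set B' : Submodule F V := (S b).map (Φ b : V →ₗ[F] V) with hB'
  have hcA : IsCompl A' (S a) := hcompl a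
  have hcB : IsCompl B' (S b) := hcompl b
  set π₁ : V →ₗ[F] B' := Submodule.projectionOnto B' (S b) hcB with hπ₁
  set π₂ : V →ₗ[F] A' := Submodule.projectionOnto A' (S a) hcA with hπ₂
  set P : V →ₗ[F] A' := π₂ ∘ₗ (B'.subtype ∘ₗ π₁) with hP
  -- pick v
  obtain ⟨v, hv, hv0⟩ := Submodule.exists_mem_ne_zero_of_ne_bot (hint p₀ q₀)
  have hvA : v ∈ S a := hv.1
  have hvB : v ∈ S b := hv.2
  -- evaluate the relation at v, then apply P
  have hgv : ∑ pq : Fin t × Fin t, g pq • (Pi pq.1 pq.2) v = 0 := by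
    have := congrArg (fun f : Module.End F V => f v) hg
    simpa using this
  have hPv : ∑ pq : Fin t × Fin t, g pq • P ((Pi pq.1 pq.2) v) = 0 := by
    have := congrArg P hgv
    simpa [map_sum, map_smul] using this
  -- vanishing of nondiagonal terms
  have hterm : ∀ pq : Fin t × Fin t, pq ≠ (p₀, q₀) → P ((Pi pq.1 pq.2) v) = 0 := by
    rintro ⟨p, q⟩ hne
    have hval : (Pi p q) v
        = Φ ⟨2 * q.val + 1, by omega⟩ (Φ ⟨2 * p.val, by omega⟩ v) := by
      rw [hPi]; rfl
    by_cases hq : q = q₀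
    · subst hq
      have hp : p ≠ p₀ := by rintro rfl; exact hne rfl
      have hpv : (p : ℕ) ≠ (p₀ : ℕ) := fun h => hp (Fin.ext h)
      have haa' : a ≠ ⟨2 * p.val, by omega⟩ := by
        simp only [ha, Fin.mk.injEq, ne_eq]; omega
      have hba' : b ≠ ⟨2 * p.val, by omega⟩ := by
        simp only [hb, Fin.mk.injEq, ne_eq]; omega
      have hxA : (Φ ⟨2 * p.val, by omega⟩ v) ∈ S a := hpres a _ haa' v hvA
      have hxB : (Φ ⟨2 * p.val, by omega⟩ v) ∈ S b := hpres b _ hba' v hvB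
      have hbq : (⟨2 * (q:ℕ) + 1, by omega⟩ : Fin (2*t)) = b := rfl
      rw [hval, hbq]
      have hTA : (Φ b (Φ ⟨2 * p.val, by omega⟩ v)) ∈ S a := hpres a b hab _ hxA
      have hTB' : (Φ b (Φ ⟨2 * p.val, by omega⟩ v)) ∈ B' :=
        Submodule.mem_map_of_mem hxB
      rw [hP]
      simp only [LinearMap.comp_apply]
      rw [hπ₁, Submodule.projectionOnto_apply_left hcB ⟨_, hTB'⟩]
      simp only [Submodule.subtype_apply]
      exact Submodule.projectionOnto_apply_right hcA ⟨_, hTA⟩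
    · -- q ≠ q₀ : term lies in S b, killed by π₁
      have hqv : (q : ℕ) ≠ (q₀ : ℕ) := fun h => hq (Fin.ext h)
      have hba' : b ≠ ⟨2 * p.val, by omega⟩ := by
        simp only [hb, Fin.mk.injEq, ne_eq]; omega
      have hbb' : b ≠ ⟨2 * q.val + 1, by omega⟩ := by
        simp only [hb, Fin.mk.injEq, ne_eq]; omega
      have hxB : (Φ ⟨2 * p.val, by omega⟩ v) ∈ S b := hpres b _ hba' v hvB
      have hTB : (Φ ⟨2 * q.val + 1, by omega⟩ (Φ ⟨2 * p.val, by omega⟩ v)) ∈ S b :=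
        hpres b _ hbb' _ hxB
      rw [hval, hP]
      simp only [LinearMap.comp_apply]
      rw [hπ₁, Submodule.projectionOnto_apply_right hcB ⟨_, hTB⟩]
      simp
  -- the main term is nonzero
  have hmain : P ((Pi p₀ q₀) v) ≠ 0 := by
    have hval : (Pi p₀ q₀) v = Φ b (Φ a v) := by rw [hPi]; rfl
    have huA' : (Φ a v) ∈ A' := Submodule.mem_map_of_mem hvA
    have huB : (Φ a v) ∈ S b := hpres b a (Ne.symm hab) v hvB
    have hwB' : (Φ b (Φ a v)) ∈ B' := Submodule.mem_map_of_mem huB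
    have hwA : (Φ b (Φ a v)) ∉ S a := by
      intro hw
      have huSa : (Φ a v) ∈ S a := hpres' a b hab _ hw
      have : (Φ a v) ∈ A' ⊓ S a := ⟨huA', huSa⟩
      rw [hA', h2 a] at this
      have hu0 : (Φ a v) ≠ 0 := by
        simp only [ne_eq, LinearEquiv.map_eq_zero_iff]; exact hv0
      exact hu0 (Submodule.mem_bot F |>.mp this)
    rw [hval, hP]
    simp only [LinearMap.comp_apply]
    rw [hπ₁, Submodule.projectionOnto_apply_left hcB ⟨_, hwB'⟩]
    simp only [Submodule.subtype_apply]
    intro h0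
    rw [hπ₂, Submodule.projectionOnto_apply_eq_zero_iff] at h0
    exact hwA h0
  -- conclude
  have := Finset.sum_eq_single (M := A') (p₀, q₀)
    (fun pq _ hne => by rw [hterm pq hne, smul_zero])
    (fun h => absurd (Finset.mem_univ _) h)
    (f := fun pq => g pq • P ((Pi pq.1 pq.2) v))
  rw [hPv] at this
  rcases smul_eq_zero.mp this.symm with h | h
  · exact h
  · exact absurd h hmain
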